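/- arXiv:2502.14979 — 6 statements merged into one kernel-verified Lean document; each statement's English description precedes it below -/
import Mathlib

section
/- Let A be a symmetric positive definite n×n matrix, X the exact solution of AX = B, and let X_{k-1}, X_k, R_{k-1}, R_k, P_{k-1}, Υ_{k-1} satisfy the BCG update relations X_k = X_{k-1} + P_{k-1}Υ_{k-1}, R_k = B - AX_k, with P_{k-1}ᵀR_k = 0 and Υ_{k-1} = (P_{k-1}ᵀAP_{k-1})⁻¹(R_{k-1}ᵀR_{k-1}) where P_{k-1}ᵀAP_{k-1} is invertible. Then 𝔈_{k-1} - 𝔈_k = (R_{k-1}ᵀR_{k-1})Υ_{k-1}, where 𝔈_j = (X - X_j)ᵀA(X - X_j). -/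
open Matrix

theorem stmt_3 {n m : ℕ} (A : Matrix (Fin n) (Fin n) ℝ) (hA : A.PosDef)
    (B X Xkm1 Xk Pkm1 : Matrix (Fin n) (Fin m) ℝ)
    (Ups : Matrix (Fin m) (Fin m) ℝ)
    (hX : A * X = B)
    (hXk : Xk = Xkm1 + Pkm1 * Ups)
    (horth : Pkm1ᵀ * (B - A * Xk) = 0)
    (hPAP : IsUnit (Pkm1ᵀ * A * Pkm1))
    (hUps : Ups = (Pkm1ᵀ * A * Pkm1)⁻¹ * ((B - A * Xkm1)ᵀ * (B - A * Xkm1))) :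
    (X - Xkm1)ᵀ * A * (X - Xkm1) - (X - Xk)ᵀ * A * (X - Xk)
      = (B - A * Xkm1)ᵀ * (B - A * Xkm1) * Ups := by
  have hAT : Aᵀ = A := by simpa using hA.isHermitian.eq
  have hdet : IsUnit (Pkm1ᵀ * A * Pkm1).det := (Matrix.isUnit_iff_isUnit_det _).mp hPAP
  -- key: Pᵀ R_{k-1} = (PᵀAP) Ups
  have hkey : Pkm1ᵀ * (B - A * Xkm1) = Pkm1ᵀ * A * Pkm1 * Ups := by
    have h := horth
    rw [hXk] at h
    have h2 : Pkm1ᵀ * (B - A * Xkm1) - Pkm1ᵀ * A * Pkm1 * Ups = 0 := by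
      calc Pkm1ᵀ * (B - A * Xkm1) - Pkm1ᵀ * A * Pkm1 * Ups
          = Pkm1ᵀ * (B - A * (Xkm1 + Pkm1 * Ups)) := by
            simp only [Matrix.mul_add, Matrix.mul_sub, Matrix.mul_assoc]; abel
        _ = 0 := h
    exact sub_eq_zero.mp h2
  have hkey2 : Pkm1ᵀ * (B - A * Xkm1) = (B - A * Xkm1)ᵀ * (B - A * Xkm1) := by
    rw [hkey, hUps, ← Matrix.mul_assoc, Matrix.mul_nonsing_inv _ hdet, Matrix.one_mul]
  have hSsym : (Pkm1ᵀ * A * Pkm1)ᵀ = Pkm1ᵀ * A * Pkm1 := by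
    rw [Matrix.transpose_mul, Matrix.transpose_mul, Matrix.transpose_transpose, hAT,
      Matrix.mul_assoc]
  have h1 : (X - Xkm1)ᵀ * A = (B - A * Xkm1)ᵀ := by
    rw [← hAT, ← Matrix.transpose_mul, Matrix.mul_sub, hX, hAT]
  have h2 : (X - Xk)ᵀ * A = (B - A * Xk)ᵀ := by
    rw [← hAT, ← Matrix.transpose_mul, Matrix.mul_sub, hX, hAT]
  have horthT : (B - A * Xk)ᵀ * Pkm1 = 0 := by
    have := congrArg Matrix.transpose horth
    simpa [Matrix.transpose_mul] using this
  rw [h1, h2]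
  have hXkR : B - A * Xk = (B - A * Xkm1) - A * (Pkm1 * Ups) := by
    rw [hXk]; simp only [Matrix.mul_add]; abel
  have hAE : A * (X - Xkm1) = B - A * Xkm1 := by rw [Matrix.mul_sub, hX]
  have hx : X - (Xkm1 + Pkm1 * Ups) = (X - Xkm1) - Pkm1 * Ups := by abel
  calc (B - A * Xkm1)ᵀ * (X - Xkm1) - (B - A * Xk)ᵀ * (X - Xk)
      = (B - A * Xkm1)ᵀ * (X - Xkm1)
        - ((B - A * Xk)ᵀ * (X - Xkm1) - ((B - A * Xk)ᵀ * Pkm1) * Ups) := by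
        rw [hXk, hx, Matrix.mul_sub ((B - A * (Xkm1 + Pkm1 * Ups))ᵀ) (X - Xkm1) (Pkm1 * Ups),
          Matrix.mul_assoc]
    _ = (B - A * Xkm1)ᵀ * (X - Xkm1) - (B - A * Xk)ᵀ * (X - Xkm1) := by
        rw [horthT, Matrix.zero_mul, sub_zero]
    _ = (A * (Pkm1 * Ups))ᵀ * (X - Xkm1) := by
        rw [hXkR]; simp only [Matrix.transpose_sub, Matrix.sub_mul]; abel
    _ = Upsᵀ * (Pkm1ᵀ * (A * (X - Xkm1))) := by
        rw [Matrix.transpose_mul, Matrix.transpose_mul, hAT]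
        simp only [Matrix.mul_assoc]
    _ = Upsᵀ * (Pkm1ᵀ * A * Pkm1 * Ups) := by rw [hAE, hkey]
    _ = Upsᵀ * (Pkm1ᵀ * A * Pkm1) * Ups := by simp only [Matrix.mul_assoc]
    _ = (Pkm1ᵀ * A * Pkm1 * Ups)ᵀ * Ups := by
        rw [Matrix.transpose_mul, hSsym, Matrix.mul_assoc]
    _ = (B - A * Xkm1)ᵀ * (B - A * Xkm1) * Ups := by
        rw [← hkey, hkey2, Matrix.transpose_mul, Matrix.transpose_transpose]
end

section
/- Under the BCG relations X_k = X_{k-1} + P_{k-1}Υ_{k-1}, P_{k-1}ᵀR_k = 0, Υ_{k-1} = (P_{k-1}ᵀAP_{k-1})⁻¹(R_{k-1}ᵀR_{k-1}) with A symmetric positive definite and P_{k-1}Υ_{k-1} of full column rank, the matrix Θ_{k-1} = (R_{k-1}ᵀR_{k-1})Υ_{k-1} is symmetric positive definite. -/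
open Matrix

lemma aux_posdef_conj {n m : ℕ} {A : Matrix (Fin n) (Fin n) ℝ} (hA : A.PosDef)
    (M : Matrix (Fin n) (Fin m) ℝ)
    (hM : Function.Injective fun v : Fin m → ℝ => M.mulVec v) :
    (Mᵀ * A * M).PosDef := by
  rw [posDef_iff_dotProduct_mulVec]
  constructor
  · have hAh : Aᵀ = A := hA.isHermitian
    show (Mᵀ * A * M)ᴴ = _
    simp only [conjTranspose_eq_transpose_of_trivial, Matrix.transpose_mul,
      transpose_transpose, hAh, Matrix.mul_assoc]
  · intro x hx
    have hMx : M.mulVec x ≠ 0 := by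
      intro h
      apply hx
      apply hM
      simpa using h
    have h2 := hA.dotProduct_mulVec_pos hMx
    have heq : x ⬝ᵥ (Mᵀ * A * M).mulVec x = (M.mulVec x) ⬝ᵥ A.mulVec (M.mulVec x) := by
      rw [← Matrix.mulVec_mulVec, ← Matrix.mulVec_mulVec, Matrix.dotProduct_mulVec,
        Matrix.vecMul_transpose]
    show (0 : ℝ) < star x ⬝ᵥ (Mᵀ * A * M).mulVec x
    rw [star_trivial, heq]
    simpa using h2

theorem stmt_4 {n m : ℕ} (A : Matrix (Fin n) (Fin n) ℝ) (hA : A.PosDef)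
    (B X Xkm1 Xk Pkm1 : Matrix (Fin n) (Fin m) ℝ)
    (Ups : Matrix (Fin m) (Fin m) ℝ)
    (hX : A * X = B)
    (hXk : Xk = Xkm1 + Pkm1 * Ups)
    (horth : Pkm1ᵀ * (B - A * Xk) = 0)
    (hPAP : IsUnit (Pkm1ᵀ * A * Pkm1))
    (hUps : Ups = (Pkm1ᵀ * A * Pkm1)⁻¹ * ((B - A * Xkm1)ᵀ * (B - A * Xkm1)))
    (hrank : Function.Injective fun v : Fin m → ℝ => (Pkm1 * Ups).mulVec v) :
    ((B - A * Xkm1)ᵀ * (B - A * Xkm1) * Ups).PosDef := by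
  set R := B - A * Xkm1 with hR
  set S := Pkm1ᵀ * A * Pkm1 with hS
  have hAh : Aᵀ = A := hA.isHermitian
  have hSsymm : Sᵀ = S := by
    simp [hS, Matrix.transpose_mul, transpose_transpose, hAh, Matrix.mul_assoc]
  have hUpsT : Upsᵀ = R ᵀ * R * S⁻¹ := by
    rw [hUps, Matrix.transpose_mul, Matrix.transpose_nonsing_inv, hSsymm,
      Matrix.transpose_mul, transpose_transpose]
  have hinv : S⁻¹ * S = 1 := Matrix.nonsing_inv_mul S ((Matrix.isUnit_iff_isUnit_det S).mp hPAP)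
  have key : Rᵀ * R * Ups = (Pkm1 * Ups)ᵀ * A * (Pkm1 * Ups) := by
    have : (Pkm1 * Ups)ᵀ * A * (Pkm1 * Ups) = Upsᵀ * S * Ups := by
      simp only [Matrix.transpose_mul, hS, Matrix.mul_assoc]
    rw [this, hUpsT, Matrix.mul_assoc (Rᵀ * R), hinv, Matrix.mul_one]
  rw [key]
  exact aux_posdef_conj hA (Pkm1 * Ups) hrank
end

section
/- Let T_k be a nonsingular symmetric block tridiagonal matrix of order km admitting the block factorization T_k = L̃_k D_k⁻¹ L̃_k^T with diagonal blocks Δ_j and subdiagonal blocks Γ_j, where Π_j = Γ_jΔ_j⁻¹. Then the last m×m block of the first block column of T_k⁻¹ equals (−1)^{k-1} Δ_k⁻¹ Π_{k-1}⋯Π₁. -/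
open Matrix

/-- Block tridiagonal matrix with diagonal blocks `Ω j` and
subdiagonal block `Γ j` at block position `(j, j-1)` (0-based row `j`). -/
noncomputable def blockTridiag {k m : ℕ} (Ω Γ : ℕ → Matrix (Fin m) (Fin m) ℝ) :
    Matrix (Fin k × Fin m) (Fin k × Fin m) ℝ :=
  Matrix.of fun p q =>
    if (p.1 : ℕ) = (q.1 : ℕ) then Ω (q.1 : ℕ) p.2 q.2
    else if (p.1 : ℕ) = (q.1 : ℕ) + 1 then Γ (p.1 : ℕ) p.2 q.2
    else if (q.1 : ℕ) = (p.1 : ℕ) + 1 then (Γ (q.1 : ℕ))ᵀ p.2 q.2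
    else 0

/-- Lower block bidiagonal matrix with diagonal blocks `Δ j` (0-based) and
subdiagonal block `Γ j` at block position `(j, j-1)` (0-based row `j`). -/
noncomputable def lowerBlockBidiag {k m : ℕ} (Δ Γ : ℕ → Matrix (Fin m) (Fin m) ℝ) :
    Matrix (Fin k × Fin m) (Fin k × Fin m) ℝ :=
  Matrix.of fun p q =>
    if (p.1 : ℕ) = (q.1 : ℕ) then Δ (q.1 : ℕ) p.2 q.2
    else if (p.1 : ℕ) = (q.1 : ℕ) + 1 then Γ (p.1 : ℕ) p.2 q.2
    else 0

/-- Block diagonal matrix with diagonal blocks `Δ j`. -/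
noncomputable def blockDiag {k m : ℕ} (Δ : ℕ → Matrix (Fin m) (Fin m) ℝ) :
    Matrix (Fin k × Fin m) (Fin k × Fin m) ℝ :=
  Matrix.of fun p q =>
    if (p.1 : ℕ) = (q.1 : ℕ) then Δ (q.1 : ℕ) p.2 q.2 else 0

/-- First block column of the identity: `E₁ = e₁ ⊗ I_m`. -/
noncomputable def firstBlockCol {k m : ℕ} : Matrix (Fin k × Fin m) (Fin m) ℝ :=
  Matrix.of fun p b =>
    if (p.1 : ℕ) = 0 then (1 : Matrix (Fin m) (Fin m) ℝ) p.2 b else 0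

/-- The `i`-th `m × m` block of a block column vector. -/
noncomputable def blockOf {k m : ℕ} (M : Matrix (Fin k × Fin m) (Fin m) ℝ) (i : Fin k) :
    Matrix (Fin m) (Fin m) ℝ :=
  Matrix.of fun a b => M (i, a) b

namespace Stmt9Aux

variable {k m : ℕ}

/-- block matrix built from an ℕ-indexed family of m×m blocks -/
noncomputable def bm (k m : ℕ) (f : ℕ → ℕ → Matrix (Fin m) (Fin m) ℝ) :
    Matrix (Fin k × Fin m) (Fin k × Fin m) ℝ :=
  Matrix.of fun p q => f p.1 q.1 p.2 q.2

noncomputable def bc (k m : ℕ) (x : ℕ → Matrix (Fin m) (Fin m) ℝ) :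
    Matrix (Fin k × Fin m) (Fin m) ℝ :=
  Matrix.of fun p b => x p.1 p.2 b

noncomputable def br (k m : ℕ) (r : ℕ → Matrix (Fin m) (Fin m) ℝ) :
    Matrix (Fin m) (Fin k × Fin m) ℝ :=
  Matrix.of fun a p => r p.1 a p.2

lemma bm_congr {f g : ℕ → ℕ → Matrix (Fin m) (Fin m) ℝ}
    (h : ∀ i j, i < k → j < k → f i j = g i j) : bm k m f = bm k m g := by
  ext ⟨i, a⟩ ⟨j, b⟩
  simp only [bm, Matrix.of_apply]
  rw [h i j i.isLt j.isLt]

lemma bc_congr {x y : ℕ → Matrix (Fin m) (Fin m) ℝ}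
    (h : ∀ i, i < k → x i = y i) : bc k m x = bc k m y := by
  ext ⟨i, a⟩ b
  simp only [bc, Matrix.of_apply]
  rw [h i i.isLt]

lemma br_congr {x y : ℕ → Matrix (Fin m) (Fin m) ℝ}
    (h : ∀ i, i < k → x i = y i) : br k m x = br k m y := by
  ext a ⟨i, b⟩
  simp only [br, Matrix.of_apply]
  rw [h i i.isLt]

lemma bm_apply (f : ℕ → ℕ → Matrix (Fin m) (Fin m) ℝ) (i j : Fin k) (a b : Fin m) :
    bm k m f (i, a) (j, b) = f i j a b := rfl

lemma bm_inj {f g : ℕ → ℕ → Matrix (Fin m) (Fin m) ℝ} (h : bm k m f = bm k m g)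
    (i j : Fin k) : f i j = g i j := by
  ext a b
  have := congrFun (congrFun h (i, a)) (j, b)
  simpa [bm] using this

lemma bm_mul (f g : ℕ → ℕ → Matrix (Fin m) (Fin m) ℝ) :
    bm k m f * bm k m g = bm k m (fun i j => ∑ l ∈ Finset.range k, f i l * g l j) := by
  ext ⟨i, a⟩ ⟨j, b⟩
  simp only [bm, Matrix.mul_apply, Matrix.of_apply, Matrix.sum_apply]
  rw [Fintype.sum_prod_type,
    Fin.sum_univ_eq_sum_range (fun l => ∑ c : Fin m, f (i : ℕ) l a c * g l (j : ℕ) c b) k]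

lemma bm_mul_bc (f : ℕ → ℕ → Matrix (Fin m) (Fin m) ℝ) (x : ℕ → Matrix (Fin m) (Fin m) ℝ) :
    bm k m f * bc k m x = bc k m (fun i => ∑ l ∈ Finset.range k, f i l * x l) := by
  ext ⟨i, a⟩ b
  simp only [bm, bc, Matrix.mul_apply, Matrix.of_apply, Matrix.sum_apply]
  rw [Fintype.sum_prod_type,
    Fin.sum_univ_eq_sum_range (fun l => ∑ c : Fin m, f (i : ℕ) l a c * x l c b) k]

lemma br_mul_bm (r : ℕ → Matrix (Fin m) (Fin m) ℝ) (f : ℕ → ℕ → Matrix (Fin m) (Fin m) ℝ) :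
    br k m r * bm k m f = br k m (fun j => ∑ l ∈ Finset.range k, r l * f l j) := by
  ext a ⟨j, b⟩
  simp only [bm, br, Matrix.mul_apply, Matrix.of_apply, Matrix.sum_apply]
  rw [Fintype.sum_prod_type,
    Fin.sum_univ_eq_sum_range (fun l => ∑ c : Fin m, r l a c * f l (j : ℕ) c b) k]

lemma br_mul_bc (r x : ℕ → Matrix (Fin m) (Fin m) ℝ) :
    br k m r * bc k m x = ∑ l ∈ Finset.range k, r l * x l := by
  ext a b
  simp only [br, bc, Matrix.mul_apply, Matrix.of_apply, Matrix.sum_apply]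
  rw [Fintype.sum_prod_type,
    Fin.sum_univ_eq_sum_range (fun l => ∑ c : Fin m, r l a c * x l c b) k]

lemma one_eq_bm : (1 : Matrix (Fin k × Fin m) (Fin k × Fin m) ℝ) =
    bm k m (fun i j => if i = j then 1 else 0) := by
  ext ⟨i, a⟩ ⟨j, b⟩
  simp only [bm, Matrix.of_apply, Matrix.one_apply, Prod.mk.injEq]
  split_ifs <;> simp_all [Prod.ext_iff, Fin.ext_iff, Matrix.one_apply]

lemma sum_ite₁ {β : Type*} [AddCommMonoid β] {n K : ℕ} (h : n < K) (F : ℕ → β) :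
    (∑ l ∈ Finset.range K, if n = l then F l else 0) = F n := by
  rw [Finset.sum_ite_eq]
  simp [Finset.mem_range.mpr h]

lemma sum_ite₁' {β : Type*} [AddCommMonoid β] {n K : ℕ} (h : n < K) (F : ℕ → β) :
    (∑ l ∈ Finset.range K, if l = n then F l else 0) = F n := by
  rw [Finset.sum_ite_eq']
  simp [Finset.mem_range.mpr h]

noncomputable def fT (Ω Γ : ℕ → Matrix (Fin m) (Fin m) ℝ) : ℕ → ℕ → Matrix (Fin m) (Fin m) ℝ :=
  fun i j => if i = j then Ω j else if i = j + 1 then Γ i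
    else if j = i + 1 then (Γ j)ᵀ else 0

noncomputable def fL (Δ Γ : ℕ → Matrix (Fin m) (Fin m) ℝ) : ℕ → ℕ → Matrix (Fin m) (Fin m) ℝ :=
  fun i j => if i = j then Δ j else if i = j + 1 then Γ i else 0

noncomputable def fLt (Δ Γ : ℕ → Matrix (Fin m) (Fin m) ℝ) : ℕ → ℕ → Matrix (Fin m) (Fin m) ℝ :=
  fun i j => if i = j then (Δ i)ᵀ else if j = i + 1 then (Γ j)ᵀ else 0

noncomputable def fD (Δ : ℕ → Matrix (Fin m) (Fin m) ℝ) : ℕ → ℕ → Matrix (Fin m) (Fin m) ℝ :=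
  fun i j => if i = j then Δ j else 0

noncomputable def fDi (Δ : ℕ → Matrix (Fin m) (Fin m) ℝ) : ℕ → ℕ → Matrix (Fin m) (Fin m) ℝ :=
  fun i j => if i = j then (Δ j)⁻¹ else 0

noncomputable def xcol (Δ Γ : ℕ → Matrix (Fin m) (Fin m) ℝ) : ℕ → Matrix (Fin m) (Fin m) ℝ :=
  fun j => ((-1 : ℝ) ^ j) •
    ((Δ j)⁻¹ * ((List.range j).map fun i => Γ (j - i) * (Δ (j - 1 - i))⁻¹).prod)

lemma T_eq (Ω Γ : ℕ → Matrix (Fin m) (Fin m) ℝ) :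
    (blockTridiag Ω Γ : Matrix (Fin k × Fin m) (Fin k × Fin m) ℝ) = bm k m (fT Ω Γ) := by
  ext ⟨i, a⟩ ⟨j, b⟩
  simp only [blockTridiag, bm, fT, Matrix.of_apply]
  split_ifs <;> simp

lemma L_eq (Δ Γ : ℕ → Matrix (Fin m) (Fin m) ℝ) :
    (lowerBlockBidiag Δ Γ : Matrix (Fin k × Fin m) (Fin k × Fin m) ℝ) = bm k m (fL Δ Γ) := by
  ext ⟨i, a⟩ ⟨j, b⟩
  simp only [lowerBlockBidiag, bm, fL, Matrix.of_apply]
  split_ifs <;> simp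

lemma Lt_eq (Δ Γ : ℕ → Matrix (Fin m) (Fin m) ℝ) :
    (lowerBlockBidiag Δ Γ : Matrix (Fin k × Fin m) (Fin k × Fin m) ℝ)ᵀ = bm k m (fLt Δ Γ) := by
  ext ⟨i, a⟩ ⟨j, b⟩
  simp only [lowerBlockBidiag, bm, fLt, Matrix.transpose_apply, Matrix.of_apply]
  split_ifs <;> first | rfl | (exfalso; omega)

lemma D_eq (Δ : ℕ → Matrix (Fin m) (Fin m) ℝ) :
    (_root_.blockDiag Δ : Matrix (Fin k × Fin m) (Fin k × Fin m) ℝ) = bm k m (fD Δ) := by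
  ext ⟨i, a⟩ ⟨j, b⟩
  simp only [_root_.blockDiag, bm, fD, Matrix.of_apply]
  split_ifs <;> simp

lemma E_eq : (firstBlockCol : Matrix (Fin k × Fin m) (Fin m) ℝ)
    = bc k m (fun i => if i = 0 then 1 else 0) := by
  ext ⟨i, a⟩ b
  simp only [firstBlockCol, bc, Matrix.of_apply]
  split_ifs <;> simp

end Stmt9Aux

theorem stmt_9 {k m : ℕ} (hk : 0 < k) (Ω Γ Δ : ℕ → Matrix (Fin m) (Fin m) ℝ)
    (hTsym : (blockTridiag Ω Γ : Matrix (Fin k × Fin m) (Fin k × Fin m) ℝ)ᵀ =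
      blockTridiag Ω Γ)
    (hTunit : IsUnit (blockTridiag Ω Γ : Matrix (Fin k × Fin m) (Fin k × Fin m) ℝ))
    (hΔunit : ∀ j, j < k → IsUnit (Δ j))
    (hfact : (blockTridiag Ω Γ : Matrix (Fin k × Fin m) (Fin k × Fin m) ℝ) =
      lowerBlockBidiag Δ Γ * (blockDiag Δ : Matrix (Fin k × Fin m) (Fin k × Fin m) ℝ)⁻¹ *
        (lowerBlockBidiag Δ Γ)ᵀ) :
    blockOf ((blockTridiag Ω Γ : Matrix (Fin k × Fin m) (Fin k × Fin m) ℝ)⁻¹ * firstBlockCol)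
        ⟨k - 1, Nat.sub_lt hk one_pos⟩ =
      ((-1 : ℝ) ^ (k - 1)) •
        ((Δ (k - 1))⁻¹ *
          ((List.range (k - 1)).map fun i => Γ (k - 1 - i) * (Δ (k - 2 - i))⁻¹).prod) := by
  classical
  open Stmt9Aux in
  have hkk : k - 1 < k := Nat.sub_lt hk one_pos
  have hdet : ∀ j, j < k → IsUnit (Δ j).det := fun j hj =>
    (Matrix.isUnit_iff_isUnit_det _).mp (hΔunit j hj)
  have hΔmul : ∀ j, j < k → Δ j * (Δ j)⁻¹ = 1 := fun j hj => Matrix.mul_nonsing_inv _ (hdet j hj)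
  have hΔmul' : ∀ j, j < k → (Δ j)⁻¹ * Δ j = 1 := fun j hj => Matrix.nonsing_inv_mul _ (hdet j hj)
  have hT := T_eq (k := k) (m := m) Ω Γ
  have hL := L_eq (k := k) (m := m) Δ Γ
  have hLt := Lt_eq (k := k) (m := m) Δ Γ
  have hD := D_eq (k := k) (m := m) Δ
  -- D * Di = 1 and Di * D = 1
  have hDDi : bm k m (fD Δ) * bm k m (fDi Δ) = 1 := by
    rw [bm_mul, one_eq_bm]
    refine bm_congr fun i j hi hj => ?_
    have ht : ∀ l, fD Δ i l * fDi Δ l j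
        = if i = l then (if l = j then Δ l * (Δ j)⁻¹ else 0) else 0 := by
      intro l; simp only [fD, fDi]; split_ifs <;> simp
    rw [Finset.sum_congr rfl fun l _ => ht l, sum_ite₁ hi]
    by_cases h : i = j
    · subst h; simp [hΔmul i hi]
    · simp [h]
  have hDiD : bm k m (fDi Δ) * bm k m (fD Δ) = 1 := by
    rw [bm_mul, one_eq_bm]
    refine bm_congr fun i j hi hj => ?_
    have ht : ∀ l, fDi Δ i l * fD Δ l j
        = if i = l then (if l = j then (Δ l)⁻¹ * Δ j else 0) else 0 := by
      intro l; simp only [fD, fDi]; split_ifs <;> simp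
    rw [Finset.sum_congr rfl fun l _ => ht l, sum_ite₁ hi]
    by_cases h : i = j
    · subst h; simp [hΔmul' i hi]
    · simp [h]
  have hDinv : (_root_.blockDiag Δ : Matrix (Fin k × Fin m) (Fin k × Fin m) ℝ)⁻¹
      = bm k m (fDi Δ) := Matrix.inv_eq_right_inv (by rw [hD]; exact hDDi)
  have hDiinv : (bm k m (fDi Δ))⁻¹ = bm k m (fD Δ) := Matrix.inv_eq_right_inv hDiD
  have hfact' : bm k m (fT Ω Γ) = bm k m (fL Δ Γ) * bm k m (fDi Δ) * bm k m (fLt Δ Γ) := by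
    rw [← hT, ← hL, ← hDinv, ← hLt]; exact hfact
  -- determinants of the factors are units
  have hTdet : IsUnit (bm k m (fT Ω Γ)).det := by
    rw [← hT]; exact (Matrix.isUnit_iff_isUnit_det _).mp hTunit
  have hLdet : IsUnit (bm k m (fL Δ Γ)).det := by
    rw [hfact', Matrix.det_mul, Matrix.det_mul] at hTdet
    exact isUnit_of_mul_isUnit_left (isUnit_of_mul_isUnit_left hTdet)
  have hLtdet : IsUnit (bm k m (fLt Δ Γ)).det := by
    rw [← hLt, Matrix.det_transpose, hL]; exact hLdet
  -- diagonal blocks of the factorization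
  have hdiag : ∀ j : Fin k, fT Ω Γ j j
      = ∑ l ∈ Finset.range k, (fL Δ Γ j l * (Δ l)⁻¹) * fLt Δ Γ l j := by
    intro j
    have h := bm_inj (show bm k m (fT Ω Γ) = bm k m
        (fun i j => ∑ l ∈ Finset.range k,
          (∑ l' ∈ Finset.range k, fL Δ Γ i l' * fDi Δ l' l) * fLt Δ Γ l j)
      by rw [hfact', bm_mul, bm_mul]) j j
    rw [h]
    refine Finset.sum_congr rfl fun l hl => ?_
    congr 1
    have ht : ∀ l', fL Δ Γ (j : ℕ) l' * fDi Δ l' l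
        = if l' = l then fL Δ Γ (j : ℕ) l' * (Δ l)⁻¹ else 0 := by
      intro l'; simp only [fDi]; split_ifs with h1 <;> simp [h1]
    rw [Finset.sum_congr rfl fun l' _ => ht l', sum_ite₁' (Finset.mem_range.mp hl)]
  -- symmetry of Ω blocks
  have hΩsym : ∀ j : Fin k, (Ω (j : ℕ))ᵀ = Ω (j : ℕ) := by
    intro j; ext a b
    have := congrFun (congrFun hTsym (j, a)) (j, b)
    simpa [blockTridiag, Matrix.transpose_apply] using this
  -- symmetry of the Δ blocks
  have hΔsym : ∀ n, n < k → (Δ n)ᵀ = Δ n := by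
    intro n
    induction n with
    | zero =>
      intro hn
      have h0 : Ω 0 = (Δ 0)ᵀ := by
        have h := hdiag ⟨0, hn⟩
        have ht : ∀ l, (fL Δ Γ 0 l * (Δ l)⁻¹) * fLt Δ Γ l 0
            = if 0 = l then (Δ 0 * (Δ 0)⁻¹) * (Δ 0)ᵀ else 0 := by
          intro l
          cases l with
          | zero => simp [fL, fLt]
          | succ n => simp [fL, fLt]
        rw [Finset.sum_congr rfl fun l _ => ht l, sum_ite₁ hn] at h
        simpa [fT, hΔmul 0 hn] using h
      have h1 := hΩsym ⟨0, hn⟩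
      simp only at h1
      rw [h0, Matrix.transpose_transpose] at h1
      exact h1.symm
    | succ n ih =>
      intro hn
      have hn' : n < k := by omega
      have hΩ : Ω (n+1) = (Δ (n+1))ᵀ + (Γ (n+1) * (Δ n)⁻¹) * (Γ (n+1))ᵀ := by
        have h := hdiag ⟨n+1, hn⟩
        have ht : ∀ l, (fL Δ Γ (n+1) l * (Δ l)⁻¹) * fLt Δ Γ l (n+1)
            = (if n+1 = l then (Δ (n+1) * (Δ (n+1))⁻¹) * (Δ (n+1))ᵀ else 0)
              + (if n = l then (Γ (n+1) * (Δ n)⁻¹) * (Γ (n+1))ᵀ else 0) := by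
          intro l
          by_cases h1 : l = n + 1
          · subst h1
            simp [fL, fLt, show ¬(n = n+1) from by omega, show ¬(n+1 = n+1+1) from by omega]
          · by_cases h2 : l = n
            · rw [h2]
              simp [fL, fLt, show ¬(n+1 = n) from by omega, show ¬(n = n+1) from by omega]
            · simp [fL, fLt, show ¬(n+1 = l) from by omega, show ¬(n+1 = l+1) from by omega,
                show ¬(l = n+1) from h1, show ¬(n = l) from fun hc => h2 hc.symm]
        rw [Finset.sum_congr rfl fun l _ => ht l, Finset.sum_add_distrib,
          sum_ite₁ hn, sum_ite₁ hn'] at h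
        simpa [fT, hΔmul (n+1) hn] using h
      have hCsym : ((Γ (n+1) * (Δ n)⁻¹) * (Γ (n+1))ᵀ)ᵀ = (Γ (n+1) * (Δ n)⁻¹) * (Γ (n+1))ᵀ := by
        rw [Matrix.transpose_mul, Matrix.transpose_mul, Matrix.transpose_transpose,
          Matrix.transpose_nonsing_inv, ih hn', Matrix.mul_assoc]
      have h1 := hΩsym ⟨n+1, hn⟩
      simp only at h1
      rw [hΩ, Matrix.transpose_add, Matrix.transpose_transpose, hCsym] at h1
      exact (add_right_cancel h1).symm
  -- the product recurrence
  have hprod : ∀ n, ((List.range (n+1)).map fun i => Γ (n+1-i) * (Δ (n+1-1-i))⁻¹).prod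
      = (Γ (n+1) * (Δ n)⁻¹) * ((List.range n).map fun i => Γ (n-i) * (Δ (n-1-i))⁻¹).prod := by
    intro n
    rw [List.range_succ_eq_map, List.map_cons, List.prod_cons, List.map_map]
    have htail : ((fun i => Γ (n+1-i) * (Δ (n+1-1-i))⁻¹) ∘ Nat.succ)
        = (fun i => Γ (n-i) * (Δ (n-1-i))⁻¹) := by
      funext i
      show Γ (n+1-(i+1)) * (Δ (n+1-1-(i+1)))⁻¹ = _
      rw [show n+1-(i+1) = n-i from by omega, show n+1-1-(i+1) = n-1-i from by omega]
    rw [htail]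
    norm_num
  -- forward substitution: L * xcol = E₁
  have hLX : bm k m (fL Δ Γ) * bc k m (xcol Δ Γ)
      = bc k m (fun i => if i = 0 then 1 else 0) := by
    rw [bm_mul_bc]
    refine bc_congr fun i hi => ?_
    match i with
    | 0 =>
      have ht : ∀ l, fL Δ Γ 0 l * xcol Δ Γ l = if 0 = l then Δ 0 * xcol Δ Γ 0 else 0 := by
        intro l
        cases l with
        | zero => simp [fL]
        | succ n => simp [fL]
      rw [Finset.sum_congr rfl fun l _ => ht l, sum_ite₁ hi]
      simp [xcol, hΔmul 0 hi]
    | (n+1) =>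
      have hn' : n < k := by omega
      have ht : ∀ l, fL Δ Γ (n+1) l * xcol Δ Γ l
          = (if n+1 = l then Δ (n+1) * xcol Δ Γ (n+1) else 0)
            + (if n = l then Γ (n+1) * xcol Δ Γ n else 0) := by
        intro l
        by_cases h1 : l = n + 1
        · subst h1
          simp [fL, show ¬(n = n+1) from by omega, show ¬(n+1 = n+1+1) from by omega]
        · by_cases h2 : l = n
          · rw [h2]
            simp [fL, show ¬(n+1 = n) from by omega]
          · simp [fL, show ¬(n+1 = l) from by omega, show ¬(n+1 = l+1) from by omega,
              show ¬(n = l) from fun hc => h2 hc.symm]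
      rw [Finset.sum_congr rfl fun l _ => ht l, Finset.sum_add_distrib,
        sum_ite₁ hi, sum_ite₁ hn', if_neg (show ¬(n+1 = 0) from by omega)]
      simp only [xcol, hprod n, Matrix.mul_smul]
      rw [show Δ (n+1) * ((Δ (n+1))⁻¹ * ((Γ (n+1) * (Δ n)⁻¹) *
            ((List.range n).map fun i => Γ (n-i) * (Δ (n-1-i))⁻¹).prod))
          = Γ (n+1) * ((Δ n)⁻¹ * ((List.range n).map fun i => Γ (n-i) * (Δ (n-1-i))⁻¹).prod)
        from by rw [← Matrix.mul_assoc, hΔmul (n+1) hi, Matrix.one_mul, Matrix.mul_assoc]]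
      rw [pow_succ, mul_neg_one, neg_smul, neg_add_cancel]
  -- row identity for the transposed factor
  have hRLt : br k m (fun l => if l = k-1 then ((Δ (k-1))ᵀ)⁻¹ else 0) * bm k m (fLt Δ Γ)
      = br k m (fun j => if j = k-1 then 1 else 0) := by
    rw [br_mul_bm]
    refine br_congr fun j hj => ?_
    have ht : ∀ l, (if l = k-1 then ((Δ (k-1))ᵀ)⁻¹ else 0) * fLt Δ Γ l j
        = if l = k-1 then ((Δ (k-1))ᵀ)⁻¹ * fLt Δ Γ (k-1) j else 0 := by
      intro l
      by_cases h : l = k-1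
      · subst h; simp
      · simp [h]
    rw [Finset.sum_congr rfl fun l _ => ht l, sum_ite₁' hkk]
    by_cases h : j = k-1
    · subst h
      have hfl : fLt Δ Γ (k-1) (k-1) = (Δ (k-1))ᵀ := by simp [fLt]
      rw [hfl, if_pos rfl]
      exact Matrix.nonsing_inv_mul _ (by rw [Matrix.det_transpose]; exact hdet _ hkk)
    · rw [if_neg h]
      have c1 : ¬((k-1 : ℕ) = j) := fun hc => h hc.symm
      have c2 : ¬(j = (k-1) + 1) := by omega
      simp [fLt, c1, c2]
  -- assembling the inverse
  have hXdef : (bm k m (fL Δ Γ))⁻¹ * firstBlockCol = bc k m (xcol Δ Γ) := by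
    rw [E_eq, ← hLX]
    exact (Matrix.mul_assoc _ _ _).symm.trans (by rw [Matrix.nonsing_inv_mul _ hLdet, Matrix.one_mul])
  have hTinv : (blockTridiag Ω Γ : Matrix (Fin k × Fin m) (Fin k × Fin m) ℝ)⁻¹
      = (bm k m (fLt Δ Γ))⁻¹ * (bm k m (fD Δ) * (bm k m (fL Δ Γ))⁻¹) := by
    rw [hT, hfact', Matrix.mul_inv_rev, Matrix.mul_inv_rev, hDiinv]
  have hcol : (blockTridiag Ω Γ : Matrix (Fin k × Fin m) (Fin k × Fin m) ℝ)⁻¹ * firstBlockCol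
      = (bm k m (fLt Δ Γ))⁻¹ * bc k m (fun i => Δ i * xcol Δ Γ i) := by
    rw [hTinv]
    refine (Matrix.mul_assoc _ _ _).trans ?_
    rw [Matrix.mul_assoc]
    refine (congrArg (fun X => (bm k m (fLt Δ Γ))⁻¹ * (bm k m (fD Δ) * X)) hXdef).trans ?_
    beta_reduce
    rw [bm_mul_bc]
    congr 1
    refine bc_congr fun i hi => ?_
    have ht : ∀ l, fD Δ i l * xcol Δ Γ l = if i = l then Δ l * xcol Δ Γ l else 0 := by
      intro l; simp only [fD]; split_ifs <;> simp
    rw [Finset.sum_congr rfl fun l _ => ht l, sum_ite₁ hi]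
  have hblock : ∀ (A : Matrix (Fin k × Fin m) (Fin m) ℝ) (i : Fin k),
      blockOf A i = br k m (fun l => if l = (i : ℕ) then 1 else 0) * A := by
    intro A i; ext a b
    simp only [blockOf, br, Matrix.mul_apply, Matrix.of_apply]
    rw [Fintype.sum_prod_type]
    rw [Finset.sum_eq_single i]
    · simp [Matrix.one_apply, ite_mul, Finset.sum_ite_eq]
    · intro l _ hl
      have : ¬((l : ℕ) = (i : ℕ)) := fun hc => hl (Fin.ext hc)
      simp [this]
    · simp
  rw [hcol, hblock]
  have hidx : ((⟨k - 1, Nat.sub_lt hk one_pos⟩ : Fin k) : ℕ) = k - 1 := rfl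
  rw [hidx, ← Matrix.mul_assoc]
  have hrowinv : br k m (fun l => if l = k-1 then 1 else 0) * (bm k m (fLt Δ Γ))⁻¹
      = br k m (fun l => if l = k-1 then ((Δ (k-1))ᵀ)⁻¹ else 0) := by
    rw [← hRLt, Matrix.mul_assoc, Matrix.mul_nonsing_inv _ hLtdet, Matrix.mul_one]
  rw [hrowinv, br_mul_bc]
  have ht : ∀ l, (if l = k-1 then ((Δ (k-1))ᵀ)⁻¹ else 0) * (Δ l * xcol Δ Γ l)
      = if l = k-1 then ((Δ (k-1))ᵀ)⁻¹ * (Δ (k-1) * xcol Δ Γ (k-1)) else 0 := by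
    intro l
    by_cases h : l = k-1
    · subst h; simp
    · simp [h]
  rw [Finset.sum_congr rfl fun l _ => ht l, sum_ite₁' hkk, hΔsym (k-1) hkk]
  simp only [xcol, Matrix.mul_smul]
  rw [show Δ (k-1) * ((Δ (k-1))⁻¹ * ((List.range (k-1)).map fun i =>
        Γ (k-1-i) * (Δ (k-1-1-i))⁻¹).prod)
      = ((List.range (k-1)).map fun i => Γ (k-1-i) * (Δ (k-1-1-i))⁻¹).prod
    from by rw [← Matrix.mul_assoc, hΔmul (k-1) hkk, Matrix.one_mul]]
  have hfun : (fun i => Γ (k-1-i) * (Δ (k-1-1-i))⁻¹) = (fun i => Γ (k-1-i) * (Δ (k-2-i))⁻¹) := by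
    funext i
    rw [show k-1-1-i = k-2-i from by omega]
  rw [hfun]
end

section
/- Let T_{k+1} be the symmetric block tridiagonal matrix written in 2×2 block form as [[T_k, E_kΓ_kᵀ],[Γ_kE_kᵀ, Ω_{k+1}]] with T_k and T_{k+1} positive definite. Then the (1,1) m×m block of T_{k+1}⁻¹ satisfies [T_{k+1}⁻¹]₁₁ = [T_k⁻¹]₁₁ + [Y]₁ Γ_kᵀ (Ω_{k+1} − Γ_k[Y]_kΓ_kᵀ)⁻¹ Γ_k [Y]₁ᵀ, where Y = T_k⁻¹E_k and [Y]₁, [Y]_k are its first and last m×m blocks. -/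
open Matrix

/-- Last block column of the identity: `E_k = e_k ⊗ I_m`. -/
noncomputable def lastBlockCol {k m : ℕ} : Matrix (Fin k × Fin m) (Fin m) ℝ :=
  Matrix.of fun p b =>
    if (p.1 : ℕ) = k - 1 then (1 : Matrix (Fin m) (Fin m) ℝ) p.2 b else 0

/-- The leading `m × m` block of a `km × km` matrix (`k > 0`). -/
noncomputable def block11 {k m : ℕ} (hk : 0 < k)
    (M : Matrix (Fin k × Fin m) (Fin k × Fin m) ℝ) : Matrix (Fin m) (Fin m) ℝ :=
  Matrix.of fun a b => M (⟨0, hk⟩, a) (⟨0, hk⟩, b)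

/-- The leading `m × m` block of a `(k+1)m × (k+1)m` matrix written in
`(km) ⊕ m` block form (`k > 0`). -/
noncomputable def block11ext {k m : ℕ} (hk : 0 < k)
    (M : Matrix ((Fin k × Fin m) ⊕ Fin m) ((Fin k × Fin m) ⊕ Fin m) ℝ) :
    Matrix (Fin m) (Fin m) ℝ :=
  Matrix.of fun a b => M (Sum.inl (⟨0, hk⟩, a)) (Sum.inl (⟨0, hk⟩, b))

lemma lastBlockCol_transpose_mul {k m : ℕ} (hk : 0 < k)
    (N : Matrix (Fin k × Fin m) (Fin m) ℝ) :
    (lastBlockCol : Matrix (Fin k × Fin m) (Fin m) ℝ)ᵀ * N = blockOf N ⟨k - 1, Nat.sub_lt hk one_pos⟩ := by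
  ext a b
  simp only [Matrix.mul_apply, Matrix.transpose_apply, lastBlockCol, Matrix.of_apply, blockOf]
  rw [Fintype.sum_prod_type]
  have : ∀ i : Fin k, ((i : ℕ) = k - 1) ↔ i = ⟨k - 1, Nat.sub_lt hk one_pos⟩ := by
    intro i; rw [Fin.ext_iff]
  simp_rw [this]
  rw [Finset.sum_eq_single (⟨k - 1, Nat.sub_lt hk one_pos⟩ : Fin k)]
  · simp [Matrix.one_apply]
  · intro i _ hi; simp [hi]
  · simp

lemma blockOf_mul {k m : ℕ} (P : Matrix (Fin k × Fin m) (Fin m) ℝ)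
    (N : Matrix (Fin m) (Fin m) ℝ) (i : Fin k) :
    blockOf (P * N) i = blockOf P i * N := by
  ext a b; simp [blockOf, Matrix.mul_apply]

lemma mul_transpose_block {k m : ℕ} (P Q : Matrix (Fin k × Fin m) (Fin m) ℝ)
    (i j : Fin k) (a b : Fin m) :
    (P * Qᵀ) (i, a) (j, b) = (blockOf P i * (blockOf Q j)ᵀ) a b := by
  simp [blockOf, Matrix.mul_apply]

theorem stmt_10 {k m : ℕ} (hk : 0 < k)
    (T : Matrix (Fin k × Fin m) (Fin k × Fin m) ℝ) (hT : T.PosDef)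
    (Γ Ω : Matrix (Fin m) (Fin m) ℝ)
    (hText : (Matrix.fromBlocks T (lastBlockCol * Γᵀ) (Γ * lastBlockColᵀ) Ω).PosDef)
    (hSchur : IsUnit (Ω - Γ * blockOf (T⁻¹ * lastBlockCol) ⟨k - 1, Nat.sub_lt hk one_pos⟩ * Γᵀ)) :
    block11ext hk ((Matrix.fromBlocks T (lastBlockCol * Γᵀ) (Γ * lastBlockColᵀ) Ω)⁻¹) =
      block11 hk (T⁻¹) +
        blockOf (T⁻¹ * lastBlockCol) ⟨0, hk⟩ * Γᵀ *
          (Ω - Γ * blockOf (T⁻¹ * lastBlockCol) ⟨k - 1, Nat.sub_lt hk one_pos⟩ * Γᵀ)⁻¹ *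
          Γ * (blockOf (T⁻¹ * lastBlockCol) ⟨0, hk⟩)ᵀ := by
  classical
  set E : Matrix (Fin k × Fin m) (Fin m) ℝ := lastBlockCol
  set Y : Matrix (Fin k × Fin m) (Fin m) ℝ := T⁻¹ * E with hY
  set S : Matrix (Fin m) (Fin m) ℝ :=
    Ω - Γ * blockOf Y ⟨k - 1, Nat.sub_lt hk one_pos⟩ * Γᵀ with hS
  letI instT : Invertible T := hT.isUnit.invertible
  letI instS : Invertible S := hSchur.invertible
  have hTinv : ⅟T = T⁻¹ := invOf_eq_nonsing_inv T
  -- symmetry of T⁻¹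
  have hTsymm : Tᵀ = T := by
    have := hT.isHermitian
    simpa [Matrix.IsHermitian, Matrix.conjTranspose_eq_transpose_of_trivial] using this
  have hTinvSymm : (T⁻¹)ᵀ = T⁻¹ := by
    rw [Matrix.transpose_nonsing_inv, hTsymm]
  have hEtTinv : Eᵀ * T⁻¹ = Yᵀ := by
    rw [hY, Matrix.transpose_mul, hTinvSymm]
  -- the Schur complement in the invOf formula equals S
  have hSchurEq : Ω - Γ * Eᵀ * ⅟T * (E * Γᵀ) = S := by
    rw [hTinv, hS]
    congr 1
    calc Γ * Eᵀ * T⁻¹ * (E * Γᵀ)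
        = Γ * (Eᵀ * (T⁻¹ * E)) * Γᵀ := by simp only [Matrix.mul_assoc]
      _ = Γ * blockOf Y ⟨k - 1, Nat.sub_lt hk one_pos⟩ * Γᵀ := by
          rw [← hY, lastBlockCol_transpose_mul hk]
  letI instS' : Invertible (Ω - Γ * Eᵀ * ⅟T * (E * Γᵀ)) := by
    rw [hSchurEq]; exact instS
  letI instFB : Invertible (Matrix.fromBlocks T (E * Γᵀ) (Γ * Eᵀ) Ω) :=
    Matrix.fromBlocks₁₁Invertible T (E * Γᵀ) (Γ * Eᵀ) Ω
  have hinv : (Matrix.fromBlocks T (E * Γᵀ) (Γ * Eᵀ) Ω)⁻¹ =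
      Matrix.fromBlocks
        (⅟T + ⅟T * (E * Γᵀ) * ⅟(Ω - Γ * Eᵀ * ⅟T * (E * Γᵀ)) * (Γ * Eᵀ) * ⅟T)
        (-(⅟T * (E * Γᵀ) * ⅟(Ω - Γ * Eᵀ * ⅟T * (E * Γᵀ))))
        (-(⅟(Ω - Γ * Eᵀ * ⅟T * (E * Γᵀ)) * (Γ * Eᵀ) * ⅟T))
        (⅟(Ω - Γ * Eᵀ * ⅟T * (E * Γᵀ))) := by
    rw [← invOf_eq_nonsing_inv]
    exact Matrix.invOf_fromBlocks₁₁_eq T (E * Γᵀ) (Γ * Eᵀ) Ω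
  have hSinv : ⅟(Ω - Γ * Eᵀ * ⅟T * (E * Γᵀ)) = S⁻¹ := by
    rw [hSchurEq.symm] at instS ⊢
    · rw [invOf_eq_nonsing_inv, hSchurEq]
  -- the (1,1) big block
  have hW : ⅟T + ⅟T * (E * Γᵀ) * ⅟(Ω - Γ * Eᵀ * ⅟T * (E * Γᵀ)) * (Γ * Eᵀ) * ⅟T =
      T⁻¹ + (Y * (Γᵀ * S⁻¹)) * (Y * Γᵀ)ᵀ := by
    rw [hSinv, hTinv]
    congr 1
    have h1 : T⁻¹ * (E * Γᵀ) = Y * Γᵀ := by rw [hY, Matrix.mul_assoc]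
    have h2 : Γ * Eᵀ * T⁻¹ = Γ * Yᵀ := by rw [Matrix.mul_assoc, hEtTinv]
    calc T⁻¹ * (E * Γᵀ) * S⁻¹ * (Γ * Eᵀ) * T⁻¹
        = (T⁻¹ * (E * Γᵀ)) * S⁻¹ * (Γ * Eᵀ * T⁻¹) := by simp only [Matrix.mul_assoc]
      _ = (Y * Γᵀ) * S⁻¹ * (Γ * Yᵀ) := by rw [h1, h2]
      _ = (Y * (Γᵀ * S⁻¹)) * (Y * Γᵀ)ᵀ := by
          simp only [Matrix.transpose_mul, Matrix.transpose_transpose, Matrix.mul_assoc]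
  change block11ext hk ((Matrix.fromBlocks T (E * Γᵀ) (Γ * Eᵀ) Ω)⁻¹) = _
  rw [hinv, hW]
  ext a b
  simp only [block11ext, block11, Matrix.of_apply, Matrix.fromBlocks_apply₁₁, Matrix.add_apply]
  congr 1
  rw [mul_transpose_block, blockOf_mul, blockOf_mul]
  simp [Matrix.transpose_mul, Matrix.mul_assoc]
  rw [hS, hY]; simp only [Matrix.mul_assoc]
  rfl
end

section
/- With the definitions of the previous recurrences and assuming each Δ_i and Δ̄_i^{(μ)} is symmetric positive definite with Δ_i^{(μ)} = Δ_i − Δ̄_i^{(μ)}, each Δ_i^{(μ)} is symmetric positive definite. -/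
open Matrix

private lemma congr_posdef {n : ℕ} {A B : Matrix (Fin n) (Fin n) ℝ}
    (hA : A.PosDef) (hB : IsUnit B) : (B * A * Bᵀ).PosDef := by
  have hBT : Bᵀ = Bᴴ := by ext i j; simp [conjTranspose]
  rw [hBT]
  refine PosDef.of_dotProduct_mulVec_pos ?_ ?_
  · exact isHermitian_mul_mul_conjTranspose B hA.isHermitian
  · intro x hx
    have hBu : IsUnit Bᴴ := by
      rw [← hBT]; exact (isUnit_transpose B).2 hB
    have hxB : Bᴴ *ᵥ x ≠ 0 := fun h =>
      hx ((mulVec_injective_iff_isUnit.2 hBu) (by simpa using h))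
    have h2 := hA.dotProduct_mulVec_pos hxB
    rw [← conjTranspose_conjTranspose B]
    simpa only [star_mulVec, dotProduct_mulVec, vecMul_vecMul, conjTranspose_conjTranspose] using h2

private lemma inv_sub_inv_posdef {n : ℕ} {A B : Matrix (Fin n) (Fin n) ℝ}
    (hA : A.PosDef) (hB : B.PosDef) (hD : (A - B).PosDef) :
    (B⁻¹ - A⁻¹).PosDef := by
  have hAd : IsUnit A.det := (isUnit_iff_isUnit_det A).1 hA.isUnit
  have hBd : IsUnit B.det := (isUnit_iff_isUnit_det B).1 hB.isUnit
  have hAC : A⁻¹ * A = 1 := nonsing_inv_mul A hAd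
  have hCA : A * A⁻¹ = 1 := mul_nonsing_inv A hAd
  have hBE : B⁻¹ * B = 1 := nonsing_inv_mul B hBd
  have hEB : B * B⁻¹ = 1 := mul_nonsing_inv B hBd
  have e1 : ∀ X : Matrix (Fin n) (Fin n) ℝ, A⁻¹ * (A * X) = X := fun X => by
    rw [← Matrix.mul_assoc, hAC, Matrix.one_mul]
  have e2 : ∀ X : Matrix (Fin n) (Fin n) ℝ, A * (A⁻¹ * X) = X := fun X => by
    rw [← Matrix.mul_assoc, hCA, Matrix.one_mul]
  have e3 : ∀ X : Matrix (Fin n) (Fin n) ℝ, B⁻¹ * (B * X) = X := fun X => by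
    rw [← Matrix.mul_assoc, hBE, Matrix.one_mul]
  have e4 : ∀ X : Matrix (Fin n) (Fin n) ℝ, B * (B⁻¹ * X) = X := fun X => by
    rw [← Matrix.mul_assoc, hEB, Matrix.one_mul]
  have hAsymm : Aᵀ = A := by
    have := hA.isHermitian.eq
    ext i j; have := congrFun (congrFun this i) j; simpa [conjTranspose] using this
  have key : B⁻¹ - A⁻¹ =
      A⁻¹ * ((A - B) + (A - B) * B⁻¹ * (A - B)) * (A⁻¹)ᵀ := by
    rw [transpose_nonsing_inv, hAsymm]
    simp only [Matrix.mul_sub, Matrix.sub_mul, Matrix.mul_add, Matrix.add_mul,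
      Matrix.mul_assoc, e1, e2, e3, e4, hAC, hCA, hBE, hEB, Matrix.mul_one, Matrix.one_mul]
    abel
  rw [key]
  have hDpd2 : ((A - B) * B⁻¹ * (A - B)).PosDef := by
    have h := congr_posdef hB.inv hD.isUnit
    have hDsymm : (A - B)ᵀ = A - B := by
      have := hD.isHermitian.eq
      ext i j; have := congrFun (congrFun this i) j; simpa [conjTranspose] using this
    rwa [hDsymm] at h
  have hsum : ((A - B) + (A - B) * B⁻¹ * (A - B)).PosDef := hD.add hDpd2
  exact congr_posdef hsum ((isUnit_nonsing_inv_iff).2 hA.isUnit)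

private lemma smul_one_posdef {n : ℕ} {μ : ℝ} (hμ : 0 < μ) :
    (μ • (1 : Matrix (Fin n) (Fin n) ℝ)).PosDef := by
  have h1 : (1 : Matrix (Fin n) (Fin n) ℝ).PosDef := Matrix.PosDef.one
  refine PosDef.of_dotProduct_mulVec_pos ?_ ?_
  · have := h1.isHermitian
    simpa [IsHermitian] using this.smul (μ : ℝ)
  · intro x hx
    have := h1.dotProduct_mulVec_pos hx
    simp only [smul_mulVec, dotProduct_smul] at *
    simpa using mul_pos hμ (by simpa using this)

theorem stmt_13 {m : ℕ} (μ : ℝ) (hμ : 0 < μ)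
    (Γ Δ Δbar Δμ : ℕ → Matrix (Fin m) (Fin m) ℝ)
    (hΔpd : ∀ i, (Δ i).PosDef)
    (hΔbarpd : ∀ i, (Δbar i).PosDef)
    (hdiff : ∀ i, Δ i - Δbar i = Δμ i)
    (hΓunit : ∀ i, IsUnit (Γ i))
    (hΔμ0 : Δμ 0 = μ • (1 : Matrix (Fin m) (Fin m) ℝ))
    (hΔμ : ∀ i, Δμ (i + 1) =
      μ • (1 : Matrix (Fin m) (Fin m) ℝ) + Γ i * ((Δbar i)⁻¹ - (Δ i)⁻¹) * (Γ i)ᵀ) :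
    ∀ i, (Δμ i).PosDef := by
  intro i
  induction i with
  | zero => rw [hΔμ0]; exact smul_one_posdef hμ
  | succ i ih =>
    rw [hΔμ i]
    have hDpd : (Δ i - Δbar i).PosDef := (hdiff i).symm ▸ ih
    have hinv : ((Δbar i)⁻¹ - (Δ i)⁻¹).PosDef :=
      inv_sub_inv_posdef (hΔpd i) (hΔbarpd i) hDpd
    exact (smul_one_posdef hμ).add (congr_posdef hinv (hΓunit i))
end

section
/- Let A be symmetric positive definite of order n and suppose the block Lanczos relation A𝒱_q = 𝒱_q T_q holds with 𝒱_qᵀ𝒱_q = I, 𝒱_qᵀA𝒱_q = T_q, and let X = X₀ + 𝒱_q T_q⁻¹ Ē₁Φ₀ and X_k = X₀ + 𝒱_k T_k⁻¹ E₁Φ₀ where 𝒱_k consists of the first km columns of 𝒱_q and T_k is the leading principal km×km block of T_q. Then (X − X_k)ᵀA(X − X_k) = Φ₀ᵀ([T_q⁻¹]₁₁ − [T_k⁻¹]₁₁)Φ₀, where [·]₁₁ denotes the leading m×m block. -/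
open Matrix

/-- Leading `km` columns of an `n × qm` block matrix (`k ≤ q`). -/
noncomputable def leadingBlockCols {n q m : ℕ} (k : ℕ) (hk : k ≤ q)
    (V : Matrix (Fin n) (Fin q × Fin m) ℝ) : Matrix (Fin n) (Fin k × Fin m) ℝ :=
  Matrix.of fun r p => V r (Fin.castLE hk p.1, p.2)

/-- Leading principal `km × km` submatrix of a `qm × qm` block matrix (`k ≤ q`). -/
noncomputable def leadingBlockSub {q m : ℕ} (k : ℕ) (hk : k ≤ q)
    (T : Matrix (Fin q × Fin m) (Fin q × Fin m) ℝ) :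
    Matrix (Fin k × Fin m) (Fin k × Fin m) ℝ :=
  Matrix.of fun p p' => T (Fin.castLE hk p.1, p.2) (Fin.castLE hk p'.1, p'.2)

noncomputable def emb {q m k : ℕ} (hk : k ≤ q) : Fin k × Fin m → Fin q × Fin m :=
  fun p => (Fin.castLE hk p.1, p.2)

noncomputable def Pmat {q m k : ℕ} (hk : k ≤ q) : Matrix (Fin q × Fin m) (Fin k × Fin m) ℝ :=
  Matrix.of fun p p' => if p = emb hk p' then 1 else 0

lemma mul_Pmat {α : Type*} [Fintype α] {q m k : ℕ} (hk : k ≤ q)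
    (M : Matrix α (Fin q × Fin m) ℝ) :
    HMul.hMul (self := Matrix.instHMulOfFintypeOfMulOfAddCommMonoid) M (Pmat hk) = M.submatrix id (emb hk) := by
  ext a p'
  simp [Matrix.mul_apply, Pmat, mul_ite]

lemma Pmat_mul {β : Type*} {q m k : ℕ} (hk : k ≤ q)
    (N : Matrix (Fin q × Fin m) β ℝ) :
    HMul.hMul (self := Matrix.instHMulOfFintypeOfMulOfAddCommMonoid) (Pmat hk)ᵀ N = N.submatrix (emb hk) id := by
  ext p' b
  simp [Matrix.mul_apply, Pmat, ite_mul]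

lemma leadingBlockCols_eq {n q m k : ℕ} (hk : k ≤ q) (V : Matrix (Fin n) (Fin q × Fin m) ℝ) :
    leadingBlockCols k hk V = V.submatrix id (emb hk) := rfl

lemma leadingBlockSub_eq {q m k : ℕ} (hk : k ≤ q) (T : Matrix (Fin q × Fin m) (Fin q × Fin m) ℝ) :
    leadingBlockSub k hk T = T.submatrix (emb hk) (emb hk) := rfl

lemma firstBlockCol_sub {q m k : ℕ} (hk : k ≤ q) :
    (firstBlockCol : Matrix (Fin q × Fin m) (Fin m) ℝ).submatrix (emb hk) id =
      (firstBlockCol : Matrix (Fin k × Fin m) (Fin m) ℝ) := by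
  ext p b
  simp [firstBlockCol, emb, Matrix.submatrix_apply]

lemma T_posDef {n q m : ℕ} (A : Matrix (Fin n) (Fin n) ℝ) (hA : A.PosDef)
    (V : Matrix (Fin n) (Fin q × Fin m) ℝ) (horth : Vᵀ * V = 1) :
    (Vᵀ * A * V).PosDef := by
  refine Matrix.PosDef.of_dotProduct_mulVec_pos ?_ ?_
  · have hAh : Aᵀ = A := hA.1
    show (Vᵀ * A * V)ᴴ = Vᵀ * A * V
    simp only [conjTranspose_eq_transpose_of_trivial, Matrix.transpose_mul,
      Matrix.transpose_transpose, hAh, Matrix.mul_assoc]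
  · intro x hx
    have hVx : V *ᵥ x ≠ 0 := by
      intro h
      apply hx
      have : (Vᵀ * V) *ᵥ x = 0 := by
        rw [← Matrix.mulVec_mulVec, h, Matrix.mulVec_zero]
      rwa [horth, Matrix.one_mulVec] at this
    have := hA.dotProduct_mulVec_pos hVx
    simpa [star_trivial, ← Matrix.mulVec_mulVec, dotProduct_mulVec,
      Matrix.vecMul_transpose] using this

lemma cstar_hmul {l n p : Type} [Fintype n] (M : Matrix l n ℝ) (N : Matrix n p ℝ) :
    @HMul.hMul (Matrix l n ℝ) (Matrix n p ℝ) (Matrix l p ℝ)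
      CStarMatrix.instHMulOfFintypeOfMulOfAddCommMonoid M N =
    HMul.hMul (self := Matrix.instHMulOfFintypeOfMulOfAddCommMonoid) M N := rfl

theorem stmt_19 {n q m k : ℕ} (hk : k ≤ q)
    (A : Matrix (Fin n) (Fin n) ℝ) (hA : A.PosDef)
    (V : Matrix (Fin n) (Fin q × Fin m) ℝ)
    (T : Matrix (Fin q × Fin m) (Fin q × Fin m) ℝ)
    (horth : Vᵀ * V = 1)
    (hlanczos : A * V = V * T)
    (hT : T = Vᵀ * A * V)
    (hTk : IsUnit (leadingBlockSub k hk T))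
    (Φ0 : Matrix (Fin m) (Fin m) ℝ)
    (X0 X Xk : Matrix (Fin n) (Fin m) ℝ)
    (hX : X = X0 + V * T⁻¹ * (firstBlockCol : Matrix (Fin q × Fin m) (Fin m) ℝ) * Φ0)
    (hXk : Xk = X0 + leadingBlockCols k hk V * (leadingBlockSub k hk T)⁻¹ * (firstBlockCol : Matrix (Fin k × Fin m) (Fin m) ℝ) * Φ0) :
    (X - Xk)ᵀ * A * (X - Xk) =
      Φ0ᵀ * ((firstBlockCol : Matrix (Fin q × Fin m) (Fin m) ℝ)ᵀ * T⁻¹ * firstBlockCol -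
        (firstBlockCol : Matrix (Fin k × Fin m) (Fin m) ℝ)ᵀ * (leadingBlockSub k hk T)⁻¹ * firstBlockCol) * Φ0 := by
  set Tk := leadingBlockSub k hk T with hTkdef
  set E : Matrix (Fin q × Fin m) (Fin m) ℝ := firstBlockCol
  set Ek : Matrix (Fin k × Fin m) (Fin m) ℝ := firstBlockCol
  set P : Matrix (Fin q × Fin m) (Fin k × Fin m) ℝ := Pmat hk with hP
  -- basic facts
  have hTpd : T.PosDef := hT ▸ T_posDef A hA V horth
  have hTdet : IsUnit T.det := (Matrix.isUnit_iff_isUnit_det T).mp hTpd.isUnit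
  have hTkdet : IsUnit Tk.det := (Matrix.isUnit_iff_isUnit_det Tk).mp hTk
  have hTsym : Tᵀ = T := by
    have := hTpd.1
    simpa [Matrix.IsHermitian, conjTranspose_eq_transpose_of_trivial] using this
  have hTinvsym : (T⁻¹)ᵀ = T⁻¹ := by rw [Matrix.transpose_nonsing_inv, hTsym]
  have hTksym : Tkᵀ = Tk := by
    rw [hTkdef, leadingBlockSub_eq, Matrix.transpose_submatrix, hTsym]
  have hTkinvsym : (Tk⁻¹)ᵀ = Tk⁻¹ := by rw [Matrix.transpose_nonsing_inv, hTksym]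
  have hPE : Pᵀ * E = Ek := by rw [hP, Pmat_mul]; exact firstBlockCol_sub hk
  have hEP : Eᵀ * P = Ekᵀ := by rw [← hPE, Matrix.transpose_mul, Matrix.transpose_transpose]
  have hVk : leadingBlockCols k hk V = V * P := by rw [hP, mul_Pmat, leadingBlockCols_eq]
  -- pointful cancellation lemmas
  have c1 : ∀ Z : Matrix (Fin q × Fin m) (Fin m) ℝ, T⁻¹ * (T * Z) = Z := fun Z => by
    rw [← Matrix.mul_assoc, Matrix.nonsing_inv_mul T hTdet, Matrix.one_mul]
  have c2 : ∀ Z : Matrix (Fin q × Fin m) (Fin m) ℝ, T * (T⁻¹ * Z) = Z := fun Z => by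
    rw [← Matrix.mul_assoc, Matrix.mul_nonsing_inv T hTdet, Matrix.one_mul]
  have c3 : ∀ Z : Matrix (Fin k × Fin m) (Fin m) ℝ, Tk⁻¹ * (Tk * Z) = Z := fun Z => by
    rw [← Matrix.mul_assoc, Matrix.nonsing_inv_mul Tk hTkdet, Matrix.one_mul]
  have cPTP : ∀ Z : Matrix (Fin k × Fin m) (Fin m) ℝ, Pᵀ * (T * (P * Z)) = Tk * Z := fun Z => by
    rw [← Matrix.mul_assoc, ← Matrix.mul_assoc]
    congr 1
    rw [hP, Matrix.mul_assoc, mul_Pmat, Pmat_mul, hTkdef, leadingBlockSub_eq,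
      Matrix.submatrix_submatrix]
    rfl
  have cPE : ∀ Z : Matrix (Fin m) (Fin m) ℝ, Pᵀ * (E * Z) = Ek * Z := fun Z => by
    rw [← Matrix.mul_assoc, hPE]
  have cEP : ∀ Z : Matrix (Fin k × Fin m) (Fin m) ℝ, Eᵀ * (P * Z) = Ekᵀ * Z := fun Z => by
    rw [← Matrix.mul_assoc, hEP]
  -- step 1 : X - Xk = V * W
  set W : Matrix (Fin q × Fin m) (Fin m) ℝ :=
    T⁻¹ * (E * Φ0) - P * (Tk⁻¹ * (Ek * Φ0)) with hW
  have h1 : X - Xk = V * W := by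
    rw [hX, hXk, hVk, hW, Matrix.mul_sub]
    simp only [Matrix.mul_assoc]
    rw [add_sub_add_left_eq_sub]
  -- step 2 : reduce to Wᵀ * T * W
  have h2 : (X - Xk)ᵀ * A * (X - Xk) = Wᵀ * T * W := by
    rw [h1, Matrix.transpose_mul, hT]
    simp only [Matrix.mul_assoc]
  rw [h2, hW]
  simp only [Matrix.transpose_sub, Matrix.transpose_mul, hTinvsym, hTkinvsym,
    Matrix.transpose_transpose, Matrix.sub_mul, Matrix.mul_sub, Matrix.mul_assoc,
    c1, c2, c3, cPTP, cPE, cEP, cstar_hmul]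
  abel
end
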